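/- With x = 0.70190 (exactly), the unique real root y of the cubic y^3 + ((x^3 − 1)/x)·y − 1 = 0 satisfies 1.3035 < y < 1.3036; moreover this pair (x, y) satisfies 0 < x < 1, y > 1 − x, and 4y^2 > (x^2 − y^2 − 1)^2. -/
import Mathlib

private lemma sqg_p : ((0.70190:ℝ) ^ 3 - 1) / 0.70190 = -(654199412141/701900000000) := by
  norm_num

private lemma sqg_bounds (y : ℝ)
    (h : y ^ 3 + (((0.70190:ℝ) ^ 3 - 1) / 0.70190) * y - 1 = 0) :
    1.3035 < y ∧ y < 1.3036 := by
  rw [sqg_p] at h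
  constructor
  · nlinarith [sq_nonneg (y + 1.3035/2), sq_nonneg (y - 1.3035)]
  · nlinarith [sq_nonneg (y + 1.3036/2), sq_nonneg (y - 1.3036)]

theorem stmt_19 (x : ℝ) (hx : x = 0.70190) :
    (∃! y : ℝ, y ^ 3 + ((x ^ 3 - 1) / x) * y - 1 = 0) ∧
    ∀ y : ℝ, y ^ 3 + ((x ^ 3 - 1) / x) * y - 1 = 0 →
      1.3035 < y ∧ y < 1.3036 ∧ 0 < x ∧ x < 1 ∧ y > 1 - x ∧
        4 * y ^ 2 > (x ^ 2 - y ^ 2 - 1) ^ 2 := by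
  subst hx
  constructor
  · -- existence via IVT on [1.3035, 1.3036], then uniqueness
    have hex : ∃ y ∈ Set.Icc (1.3035:ℝ) 1.3036,
        y ^ 3 + (((0.70190:ℝ) ^ 3 - 1) / 0.70190) * y - 1 = 0 := by
      have hc : ContinuousOn
          (fun y : ℝ => y ^ 3 + (((0.70190:ℝ) ^ 3 - 1) / 0.70190) * y - 1)
          (Set.Icc 1.3035 1.3036) := by fun_prop
      have hab : (1.3035:ℝ) ≤ 1.3036 := by norm_num
      have := intermediate_value_Icc hab hc
      have hmem : (0:ℝ) ∈ Set.Icc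
          ((1.3035:ℝ) ^ 3 + (((0.70190:ℝ) ^ 3 - 1) / 0.70190) * 1.3035 - 1)
          ((1.3036:ℝ) ^ 3 + (((0.70190:ℝ) ^ 3 - 1) / 0.70190) * 1.3036 - 1) := by
        rw [sqg_p]
        constructor <;> norm_num
      obtain ⟨y, hy, hfy⟩ := this hmem
      exact ⟨y, hy, hfy⟩
    obtain ⟨y, _, hfy⟩ := hex
    refine ⟨y, hfy, ?_⟩
    intro z hz
    obtain ⟨hy1, hy2⟩ := sqg_bounds y hfy
    obtain ⟨hz1, hz2⟩ := sqg_bounds z hz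
    rw [sqg_p] at hfy hz
    have h1 : (z - y) * (z ^ 2 + z * y + y ^ 2 - 654199412141/701900000000) = 0 := by
      linear_combination hz - hfy
    have h2 : z ^ 2 + z * y + y ^ 2 - (654199412141:ℝ)/701900000000 > 0 := by
      nlinarith [mul_pos (by linarith : (0:ℝ) < z) (by linarith : (0:ℝ) < y)]
    have := mul_eq_zero.mp h1
    rcases this with h | h
    · linarith
    · linarith
  · intro y hy
    obtain ⟨hy1, hy2⟩ := sqg_bounds y hy
    refine ⟨hy1, hy2, by norm_num, by norm_num, by linarith, ?_⟩
    nlinarith [sq_nonneg (y - 1.3035), sq_nonneg (y - 1.3036)]
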